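/- Let c be the universal constant from the weighted Sobolev embedding lemma (‖φ‖_{L^∞} ≤ c‖φ‖_{H([r₁,r₂])} when r₂ ≥ 2r₁). For all 0 ≤ r₁ < r₂ ≤ ∞ and every bounded C¹ function φ on [r₁,r₂] ∩ (0,∞) with ‖φ‖_{H([r₁,r₂])} < ∞, there exists a locally Lipschitz function ψ : (0,∞) → ℝ (piecewise C¹) such that ψ(r) = φ(r) for all r ∈ [r₁,r₂] ∩ (0,∞) and ‖ψ‖_H ≤ ‖φ‖_{H([r₁,r₂])} + 3 ‖φ‖_{L^∞([r₁,r₂])}, where ‖ψ‖²_H = ∫₀^∞ ((∂ᵣψ)² + ψ²/r²) r dr (with ∂ᵣψ the a.e. derivative). Moreover, if r₂ ≥ 2r₁ then ‖ψ‖_H ≤ (3c+1) ‖φ‖_{H([r₁,r₂])}. -/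

import Mathlib

open MeasureTheory Filter Topology Set
open scoped ENNReal

noncomputable section

/-- `G(x) = ∫₀ˣ |g(y)| dy`. -/
def Gfun (g : ℝ → ℝ) (x : ℝ) : ℝ := ∫ y in (0:ℝ)..x, |g y|

/-- Assumption (A1): `G(x) → ±∞` as `x → ±∞`. -/
def A1 (g : ℝ → ℝ) : Prop := Tendsto (Gfun g) atTop atTop ∧ Tendsto (Gfun g) atBot atBot

/-- Assumption (A2): the zero set `𝒱` of `g` is discrete. -/
def A2 (g : ℝ → ℝ) : Prop :=
  ∀ ℓ : ℝ, g ℓ = 0 → ∃ ε > 0, ∀ x : ℝ, g x = 0 → |x - ℓ| < ε → x = ℓ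

/-- Assumption (A3): `g'(ℓ) ∈ {−1,1}` for every zero `ℓ` of `g`. -/
def A3 (g : ℝ → ℝ) : Prop := ∀ ℓ : ℝ, g ℓ = 0 → deriv g ℓ = 1 ∨ deriv g ℓ = -1

/-- Time derivative `∂ₜψ(t,r)`. -/
def pdt (ψ : ℝ → ℝ → ℝ) (t r : ℝ) : ℝ := deriv (fun s => ψ s r) t
/-- Radial derivative `∂ᵣψ(t,r)`. -/
def pdr (ψ : ℝ → ℝ → ℝ) (t r : ℝ) : ℝ := deriv (fun ρ => ψ t ρ) r
/-- Second time derivative `∂ₜₜψ(t,r)`. -/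
def pdtt (ψ : ℝ → ℝ → ℝ) (t r : ℝ) : ℝ := deriv (fun s => pdt ψ s r) t
/-- Second radial derivative `∂ᵣᵣψ(t,r)`. -/
def pdrr (ψ : ℝ → ℝ → ℝ) (t r : ℝ) : ℝ := deriv (fun ρ => pdr ψ t ρ) r

/-- Energy of a pair `(φ₀, φ₁)` on a set `s ⊆ (0,∞)` of radii:
`∫_s (φ₁² + (∂ᵣφ₀)² + g(φ₀)²/r²) r dr`. -/
def energyOn (g : ℝ → ℝ) (φ₀ φ₁ : ℝ → ℝ) (s : Set ℝ) : ℝ≥0∞ :=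
  ∫⁻ r in s, ENNReal.ofReal (((φ₁ r)^2 + (deriv φ₀ r)^2 + (g (φ₀ r))^2 / r^2) * r)

/-- Squared `H × L²` norm of a pair `(φ₀, φ₁)` on a set `s ⊆ (0,∞)` of radii:
`∫_s (φ₁² + (∂ᵣφ₀)² + φ₀²/r²) r dr`. -/
def HLnormSqOn (φ₀ φ₁ : ℝ → ℝ) (s : Set ℝ) : ℝ≥0∞ :=
  ∫⁻ r in s, ENNReal.ofReal (((φ₁ r)^2 + (deriv φ₀ r)^2 + (φ₀ r)^2 / r^2) * r)

/-- Squared `H` norm of a single function on a set `s ⊆ (0,∞)` of radii. -/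
def HnormSqOn (φ : ℝ → ℝ) (s : Set ℝ) : ℝ≥0∞ :=
  ∫⁻ r in s, ENNReal.ofReal (((deriv φ r)^2 + (φ r)^2 / r^2) * r)

/-- `ψ` is a classical solution of the equivariant wave map equation (WM) on `I × (0,∞)`. -/
def IsWaveMapOn (g : ℝ → ℝ) (ψ : ℝ → ℝ → ℝ) (I : Set ℝ) : Prop :=
  ContDiffOn ℝ 2 (fun p : ℝ × ℝ => ψ p.1 p.2) (I ×ˢ Ioi (0:ℝ)) ∧
  ∀ t ∈ I, ∀ r ∈ Ioi (0:ℝ),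
    pdtt ψ t r - pdrr ψ t r - pdr ψ t r / r + g (ψ t r) * deriv g (ψ t r) / r^2 = 0

/-- `φ` is a classical solution of the linearized equation (LW) with coefficient `k²` on
`I × (0,∞)`. -/
def IsLinWaveOn (k : ℝ) (φ : ℝ → ℝ → ℝ) (I : Set ℝ) : Prop :=
  ContDiffOn ℝ 2 (fun p : ℝ × ℝ => φ p.1 p.2) (I ×ˢ Ioi (0:ℝ)) ∧
  ∀ t ∈ I, ∀ r ∈ Ioi (0:ℝ),
    pdtt φ t r - pdrr φ t r - pdr φ t r / r + k^2 * φ t r / r^2 = 0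

/-- A finite-energy classical solution of the linearized equation (LW), defined for all times. -/
def IsFiniteEnergyLinWave (k : ℝ) (φ : ℝ → ℝ → ℝ) : Prop :=
  IsLinWaveOn k φ univ ∧ ∃ C : ℝ≥0∞, C < ⊤ ∧ ∀ t : ℝ, HLnormSqOn (φ t) (pdt φ t) (Ioi 0) ≤ C

/-- A (possibly constant) harmonic map: a finite-energy `C²` solution of
`Q'' + Q'/r = f(Q)/r²` on `(0,∞)`, together with its limits at `r = 0` and `r = ∞`,
which belong to the zero set `𝒱` of `g`. -/
structure HarmonicMap (g : ℝ → ℝ) where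
  Q : ℝ → ℝ
  Q0 : ℝ
  Qinf : ℝ
  smooth : ContDiffOn ℝ 2 Q (Ioi 0)
  eqn : ∀ r ∈ Ioi (0:ℝ), deriv (deriv Q) r + deriv Q r / r = g (Q r) * deriv g (Q r) / r^2
  finiteEnergy : energyOn g Q (fun _ => 0) (Ioi 0) < ⊤
  lim_zero : Tendsto Q (𝓝[>] (0:ℝ)) (𝓝 Q0)
  lim_infty : Tendsto Q atTop (𝓝 Qinf)
  zero_mem : g Q0 = 0
  infty_mem : g Qinf = 0

/-- The interval `[r₁, r₂] ∩ (0,∞)`, where `r₂` may be `+∞` (an extended real). -/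
def sIcc (r₁ : ℝ) (r₂ : EReal) : Set ℝ := {r : ℝ | r₁ ≤ r ∧ (r : EReal) ≤ r₂} ∩ Ioi 0

/-- The open interval `(r₁, r₂)`, where `r₂` may be `+∞` (an extended real). -/
def sIoo (r₁ : ℝ) (r₂ : EReal) : Set ℝ := {r : ℝ | r₁ < r ∧ (r : EReal) < r₂}

/-- The filter of approach to the (possibly infinite) point `b` within the set `s ⊆ ℝ`. -/
def approach (s : Set ℝ) (b : EReal) : Filter ℝ :=
  Filter.comap (fun r : ℝ => (r : EReal)) (𝓝 b) ⊓ Filter.principal s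

end

section ExtensionAux

open scoped NNReal
open MeasureTheory Set

/-- Integrand of the `H`-norm. -/
noncomputable def EF (ψ : ℝ → ℝ) (r : ℝ) : ℝ≥0∞ :=
  ENNReal.ofReal (((deriv ψ r)^2 + (ψ r)^2 / r^2) * r)

lemma HnormSqOn_eq_EF (ψ : ℝ → ℝ) (s : Set ℝ) : HnormSqOn ψ s = ∫⁻ r in s, EF ψ r := rfl

lemma EF_congr {ψ ρ : ℝ → ℝ} {U : Set ℝ} (hU : IsOpen U) (h : ∀ x ∈ U, ψ x = ρ x)
    {r : ℝ} (hr : r ∈ U) : EF ψ r = EF ρ r := by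
  have hd : deriv ψ r = deriv ρ r :=
    Filter.EventuallyEq.deriv_eq (Filter.eventuallyEq_of_mem (hU.mem_nhds hr) h)
  unfold EF
  rw [hd, h r hr]

lemma lint_split {f : ℝ → ℝ≥0∞} {p q : ℝ} (h : p ≤ q) :
    ∫⁻ r in Ioi p, f r = (∫⁻ r in Ioc p q, f r) + ∫⁻ r in Ioi q, f r := by
  rw [← Set.Ioc_union_Ioi_eq_Ioi h,
    lintegral_union measurableSet_Ioi Set.Ioc_disjoint_Ioi_same]

lemma lint_Ioc_Ioo {f : ℝ → ℝ≥0∞} {p q : ℝ} :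
    ∫⁻ r in Ioc p q, f r = ∫⁻ r in Ioo p q, f r :=
  (setLIntegral_congr Ioo_ae_eq_Ioc).symm

lemma piece_zero {ψ : ℝ → ℝ} {U : Set ℝ} (hU : IsOpen U) (h : ∀ x ∈ U, ψ x = 0) :
    ∫⁻ r in U, EF ψ r = 0 := by
  have hz : ∀ x ∈ U, EF ψ x = (fun _ : ℝ => (0:ℝ≥0∞)) x := by
    intro x hx
    rw [EF_congr hU h hx]
    simp [EF]
  rw [setLIntegral_congr_fun hU.measurableSet hz, lintegral_zero]

lemma piece_mid {ψ φ : ℝ → ℝ} {U s : Set ℝ} (hU : IsOpen U) (hUs : U ⊆ s)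
    (h : ∀ x ∈ U, ψ x = φ x) :
    ∫⁻ r in U, EF ψ r ≤ ∫⁻ r in s, EF φ r := by
  rw [setLIntegral_congr_fun hU.measurableSet
    (fun x hx => EF_congr hU h hx)]
  exact lintegral_mono_set hUs

lemma deriv_of_affine {ψ : ℝ → ℝ} {U : Set ℝ} (hU : IsOpen U) {A B : ℝ}
    (h : ∀ x ∈ U, ψ x = A * x + B) {r : ℝ} (hr : r ∈ U) : deriv ψ r = A := by
  have h1 : HasDerivAt (fun x : ℝ => A * x + B) A r := by
    simpa using ((hasDerivAt_id r).const_mul A).add_const B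
  have h2 : HasDerivAt ψ A r :=
    h1.congr_of_eventuallyEq (Filter.eventuallyEq_of_mem (hU.mem_nhds hr) h)
  exact h2.deriv

lemma piece_ramp {ψ : ℝ → ℝ} {p q A B C : ℝ}
    (h : ∀ x ∈ Ioo p q, ψ x = A * x + B)
    (hC : ∀ r ∈ Ioo p q, (A^2 + (A*r+B)^2/r^2) * r ≤ C) :
    ∫⁻ r in Ioc p q, EF ψ r ≤ ENNReal.ofReal C * ENNReal.ofReal (q - p) := by
  rw [lint_Ioc_Ioo]
  have key : ∀ r ∈ Ioo p q, EF ψ r ≤ ENNReal.ofReal C := by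
    intro r hr
    unfold EF
    rw [deriv_of_affine isOpen_Ioo h hr, h r hr]
    exact ENNReal.ofReal_le_ofReal (hC r hr)
  calc ∫⁻ r in Ioo p q, EF ψ r ≤ ∫⁻ _ in Ioo p q, ENNReal.ofReal C :=
        setLIntegral_mono' measurableSet_Ioo key
    _ = ENNReal.ofReal C * volume (Ioo p q) := setLIntegral_const _ _
    _ = ENNReal.ofReal C * ENNReal.ofReal (q - p) := by rw [Real.volume_Ioo]

lemma rampIn_calc {a k : ℝ} (ha : 0 < a) {r : ℝ} (hr : r ∈ Ioo (a/2) a) :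
    ((2/a*k)^2 + ((2/a*k)*r + (-k))^2/r^2) * r ≤ 8*k^2/a := by
  obtain ⟨hr1, hr2⟩ := hr
  have hr1' : a/2 ≤ r := hr1.le
  have hr2' : r ≤ a := hr2.le
  have hr0 : 0 < r := lt_of_lt_of_le (by linarith) hr1'
  have ha' : a ≠ 0 := ne_of_gt ha
  have hr' : r ≠ 0 := ne_of_gt hr0
  have ht0 : 1 ≤ 2/a*r := by
    have h1 := mul_le_mul_of_nonneg_left hr1' (le_of_lt (by positivity : (0:ℝ) < 2/a))
    have h2 : 2/a*(a/2) = 1 := by field_simp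
    linarith
  have ht1 : 2/a*r ≤ 2 := by
    have h1 := mul_le_mul_of_nonneg_left hr2' (le_of_lt (by positivity : (0:ℝ) < 2/a))
    have h2 : 2/a*a = 2 := by field_simp
    linarith
  have E1 : (2/a*k)^2 * r ≤ 4*(k^2/a) := by
    have h1 : (2/a*k)^2 * r ≤ (2/a*k)^2 * a := mul_le_mul_of_nonneg_left hr2' (sq_nonneg _)
    have h2 : (2/a*k)^2 * a = 4*(k^2/a) := by field_simp <;> ring
    linarith
  have ht : ((2/a*k)*r + (-k))^2 ≤ k^2 := by
    nlinarith [mul_nonneg (mul_nonneg (sq_nonneg k) (by linarith : (0:ℝ) ≤ 2 - 2/a*r))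
      (by linarith : (0:ℝ) ≤ 2/a*r)]
  have E2 : ((2/a*k)*r + (-k))^2/r^2 * r ≤ 2*(k^2/a) := by
    calc ((2/a*k)*r + (-k))^2/r^2 * r ≤ k^2/r^2 * r := by gcongr
      _ = k^2/r := by field_simp <;> ring
      _ ≤ k^2/(a/2) := div_le_div_of_nonneg_left (sq_nonneg k) (by positivity) hr1'
      _ = 2*(k^2/a) := by field_simp <;> ring
  have hnn : (0:ℝ) ≤ k^2/a := by positivity
  have h8 : 8*k^2/a = 8*(k^2/a) := by ring
  rw [add_mul, h8]
  linarith

lemma rampOut_calc {b k : ℝ} (hb : 0 < b) {r : ℝ} (hr : r ∈ Ioo b (2*b)) :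
    ((-(1/b)*k)^2 + ((-(1/b)*k)*r + 2*k)^2/r^2) * r ≤ 4*k^2/b := by
  obtain ⟨hr1, hr2⟩ := hr
  have hr1' : b ≤ r := hr1.le
  have hr2' : r ≤ 2*b := hr2.le
  have hr0 : 0 < r := lt_of_le_of_lt hb.le hr1
  have hb' : b ≠ 0 := ne_of_gt hb
  have hr' : r ≠ 0 := ne_of_gt hr0
  have ht0 : 1 ≤ 1/b*r := by
    have h1 := mul_le_mul_of_nonneg_left hr1' (le_of_lt (by positivity : (0:ℝ) < 1/b))
    have h2 : 1/b*b = 1 := by field_simp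
    linarith
  have ht1 : 1/b*r ≤ 2 := by
    have h1 := mul_le_mul_of_nonneg_left hr2' (le_of_lt (by positivity : (0:ℝ) < 1/b))
    have h2 : 1/b*(2*b) = 2 := by field_simp <;> ring
    linarith
  have E1 : (-(1/b)*k)^2 * r ≤ 2*(k^2/b) := by
    have h1 : (-(1/b)*k)^2 * r ≤ (-(1/b)*k)^2 * (2*b) := mul_le_mul_of_nonneg_left hr2' (sq_nonneg _)
    have h2 : (-(1/b)*k)^2 * (2*b) = 2*(k^2/b) := by field_simp <;> ring
    linarith
  have ht : ((-(1/b)*k)*r + 2*k)^2 ≤ k^2 := by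
    nlinarith [mul_nonneg (mul_nonneg (sq_nonneg k) (by linarith : (0:ℝ) ≤ 2 - 1/b*r))
      (by linarith : (0:ℝ) ≤ 1/b*r)]
  have E2 : ((-(1/b)*k)*r + 2*k)^2/r^2 * r ≤ k^2/b := by
    calc ((-(1/b)*k)*r + 2*k)^2/r^2 * r ≤ k^2/r^2 * r := by gcongr
      _ = k^2/r := by field_simp <;> ring
      _ ≤ k^2/b := div_le_div_of_nonneg_left (sq_nonneg k) hb hr1'
  have hnn : (0:ℝ) ≤ k^2/b := by positivity
  have h8 : 4*k^2/b = 4*(k^2/b) := by ring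
  rw [add_mul, h8]
  linarith

/-! Square root algebra in `ℝ≥0∞`. -/

lemma sqrt_bound {X Y : ℝ≥0∞} {m : ℝ} (hm : 0 ≤ m)
    (h : X ≤ Y + ENNReal.ofReal (8*m^2)) :
    X ^ ((1:ℝ)/2) ≤ Y ^ ((1:ℝ)/2) + ENNReal.ofReal (3*m) := by
  set a := Y ^ ((1:ℝ)/2) with ha
  set t := ENNReal.ofReal (3*m) with htdef
  have e1 : a ^ (2:ℕ) = Y := by
    rw [ha, ← ENNReal.rpow_natCast (Y ^ ((1:ℝ)/2)) 2, ← ENNReal.rpow_mul]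
    norm_num
  have e2 : t ^ (2:ℕ) = ENNReal.ofReal (9*m^2) := by
    rw [htdef, sq, ← ENNReal.ofReal_mul (by linarith)]
    ring_nf
  have key : X ≤ (a + t) ^ (2:ℕ) := by
    calc X ≤ Y + ENNReal.ofReal (8*m^2) := h
      _ ≤ a ^ (2:ℕ) + t ^ (2:ℕ) := by
          rw [e1, e2]
          exact add_le_add le_rfl (ENNReal.ofReal_le_ofReal (by nlinarith))
      _ ≤ (a + t) ^ (2:ℕ) := by
          rw [add_sq]
          exact add_le_add (le_self_add) le_rfl
  have h2 := ENNReal.rpow_le_rpow key (by norm_num : (0:ℝ) ≤ 1/2)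
  have e3 : ((a + t) ^ (2:ℕ)) ^ ((1:ℝ)/2) = a + t := by
    rw [← ENNReal.rpow_natCast (a+t) 2, ← ENNReal.rpow_mul]
    norm_num
  rwa [e3] at h2

lemma rpow_half_ofReal {Y : ℝ≥0∞} (hY : Y ≠ ⊤) :
    Y ^ ((1:ℝ)/2) = ENNReal.ofReal (Y.toReal ^ ((1:ℝ)/2)) := by
  conv_lhs => rw [← ENNReal.ofReal_toReal hY]
  rw [ENNReal.ofReal_rpow_of_nonneg ENNReal.toReal_nonneg (by norm_num)]

lemma embed_real {cc x : ℝ} {Y : ℝ≥0∞} (hc : 0 ≤ cc) (hY : Y ≠ ⊤)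
    (h : ENNReal.ofReal |x| ≤ ENNReal.ofReal cc * Y ^ ((1:ℝ)/2)) :
    |x| ≤ cc * Y.toReal ^ ((1:ℝ)/2) := by
  rw [rpow_half_ofReal hY, ← ENNReal.ofReal_mul hc] at h
  have hnn : (0:ℝ) ≤ cc * Y.toReal ^ ((1:ℝ)/2) :=
    mul_nonneg hc (Real.rpow_nonneg ENNReal.toReal_nonneg _)
  exact (ENNReal.ofReal_le_ofReal_iff hnn).mp h

lemma improved_bound {X Y : ℝ≥0∞} {c : ℝ} (hc : 0 ≤ c) (hY : Y ≠ ⊤)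
    (h : X ^ ((1:ℝ)/2) ≤ Y ^ ((1:ℝ)/2) + ENNReal.ofReal (3*(c * Y.toReal ^ ((1:ℝ)/2)))) :
    X ^ ((1:ℝ)/2) ≤ ENNReal.ofReal (3*c+1) * Y ^ ((1:ℝ)/2) := by
  have hs : (0:ℝ) ≤ Y.toReal ^ ((1:ℝ)/2) := Real.rpow_nonneg ENNReal.toReal_nonneg _
  calc X ^ ((1:ℝ)/2) ≤ Y ^ ((1:ℝ)/2) + ENNReal.ofReal (3*(c * Y.toReal ^ ((1:ℝ)/2))) := h
    _ = ENNReal.ofReal (Y.toReal ^ ((1:ℝ)/2)) + ENNReal.ofReal (3*(c * Y.toReal ^ ((1:ℝ)/2))) := by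
        rw [rpow_half_ofReal hY]
    _ = ENNReal.ofReal ((3*c+1) * Y.toReal ^ ((1:ℝ)/2)) := by
        rw [← ENNReal.ofReal_add hs (by positivity)]
        congr 1
        ring
    _ = ENNReal.ofReal (3*c+1) * ENNReal.ofReal (Y.toReal ^ ((1:ℝ)/2)) := by
        rw [ENNReal.ofReal_mul (by linarith)]
    _ = ENNReal.ofReal (3*c+1) * Y ^ ((1:ℝ)/2) := by rw [rpow_half_ofReal hY]

/-! Lipschitz machinery. -/

lemma lip_affine (A B : ℝ) : LipschitzWith ‖A‖₊ (fun x : ℝ => A * x + B) := by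
  apply LipschitzWith.of_dist_le_mul
  intro x y
  rw [Real.dist_eq, Real.dist_eq]
  have e : A*x + B - (A*y + B) = A*(x-y) := by ring
  rw [e, abs_mul]
  have : (‖A‖₊ : ℝ) = |A| := by simp [Real.norm_eq_abs]
  rw [this]

lemma lip_mul {f g : ℝ → ℝ} {s : Set ℝ} {Lf Lg : ℝ≥0} {A B : ℝ}
    (hf : LipschitzOnWith Lf f s) (hg : LipschitzOnWith Lg g s)
    (hA0 : 0 ≤ A) (hB0 : 0 ≤ B)
    (hA : ∀ x ∈ s, |f x| ≤ A) (hB : ∀ x ∈ s, |g x| ≤ B) :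
    ∃ L : ℝ≥0, LipschitzOnWith L (fun x => f x * g x) s := by
  refine ⟨Lf * B.toNNReal + Lg * A.toNNReal, LipschitzOnWith.of_dist_le_mul ?_⟩
  intro x hx y hy
  have h1 := hf.dist_le_mul x hx y hy
  have h2 := hg.dist_le_mul x hx y hy
  rw [Real.dist_eq] at h1 h2 ⊢
  rw [Real.dist_eq] at h1 h2 ⊢
  have hcoe : ((Lf * B.toNNReal + Lg * A.toNNReal : ℝ≥0) : ℝ) = Lf*B + Lg*A := by
    push_cast [Real.coe_toNNReal _ hA0, Real.coe_toNNReal _ hB0]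
    ring
  rw [hcoe]
  have key : f x * g x - f y * g y = (f x - f y) * g x + f y * (g x - g y) := by ring
  calc |f x * g x - f y * g y| = |(f x - f y) * g x + f y * (g x - g y)| := by rw [key]
    _ ≤ |(f x - f y) * g x| + |f y * (g x - g y)| := abs_add_le _ _
    _ = |f x - f y| * |g x| + |f y| * |g x - g y| := by rw [abs_mul, abs_mul]
    _ ≤ ((Lf : ℝ) * |x - y|) * B + A * ((Lg : ℝ) * |x - y|) := by
        apply add_le_add
        · exact mul_le_mul h1 (hB x hx) (abs_nonneg _) (by positivity)
        · exact mul_le_mul (hA y hy) h2 (abs_nonneg _) hA0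
    _ = ((Lf : ℝ)*B + (Lg : ℝ)*A) * |x - y| := by ring

lemma lip_of_contDiffOn {φ : ℝ → ℝ} {s : Set ℝ} (hφ : ContDiffOn ℝ 1 φ s) {u v : ℝ}
    (hsub : Icc u v ⊆ s) : ∃ L : ℝ≥0, LipschitzOnWith L φ (Icc u v) := by
  rcases le_or_gt v u with hvu | huv
  · refine ⟨1, LipschitzOnWith.of_dist_le_mul ?_⟩
    intro x hx y hy
    have hx' : x = u := le_antisymm (hx.2.trans hvu) hx.1
    have hy' : y = u := le_antisymm (hy.2.trans hvu) hy.1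
    rw [hx', hy']
    simp
  · have hφ' : ContDiffOn ℝ 1 φ (Icc u v) := hφ.mono hsub
    have hu : UniqueDiffOn ℝ (Icc u v) := uniqueDiffOn_Icc huv
    have hcont : ContinuousOn (derivWithin φ (Icc u v)) (Icc u v) :=
      hφ'.continuousOn_derivWithin hu le_rfl
    obtain ⟨C, hC⟩ := isCompact_Icc.exists_bound_of_continuousOn hcont
    refine ⟨C.toNNReal, (convex_Icc u v).lipschitzOnWith_of_nnnorm_derivWithin_le
      (hφ'.differentiableOn one_ne_zero) ?_⟩
    intro x hx
    have h1 : ‖derivWithin φ (Icc u v) x‖ ≤ C := hC x hx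
    have h2 : ‖derivWithin φ (Icc u v) x‖ ≤ C.toNNReal := h1.trans (Real.le_coe_toNNReal C)
    exact_mod_cast h2

lemma lip_total2 {φ : ℝ → ℝ} {s : Set ℝ} (hφ : ContDiffOn ℝ 1 φ s)
    (χ₁ χ₂ : ℝ → ℝ) {L1 L2 : ℝ≥0} (h1 : LipschitzWith L1 χ₁) (h2 : LipschitzWith L2 χ₂)
    (hb1 : ∀ x, |χ₁ x| ≤ 1) (hb2 : ∀ x, |χ₂ x| ≤ 1)
    (proj : ℝ → ℝ) {Lp : ℝ≥0} (hp : LipschitzWith Lp proj)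
    {u v : ℝ} (hsub : Icc u v ⊆ s) {K : Set ℝ} (hmaps : ∀ x ∈ K, proj x ∈ Icc u v) :
    ∃ L : ℝ≥0, LipschitzOnWith L (fun r => χ₁ r * (χ₂ r * φ (proj r))) K := by
  obtain ⟨Lφ, hLφ⟩ := lip_of_contDiffOn hφ hsub
  obtain ⟨C, hC⟩ := isCompact_Icc.exists_bound_of_continuousOn
    ((hφ.continuousOn).mono hsub)
  have hcomp : LipschitzOnWith (Lφ * Lp) (φ ∘ proj) K :=
    hLφ.comp (hp.lipschitzOnWith) hmaps
  have hCb : ∀ x ∈ K, |φ (proj x)| ≤ max C 0 := fun x hx =>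
    ((hC _ (hmaps x hx)).trans (le_max_left _ _))
  obtain ⟨Lg, hLg⟩ := lip_mul (h2.lipschitzOnWith (s := K)) hcomp zero_le_one
    (le_max_right C 0) (fun x _ => hb2 x) hCb
  have hgb : ∀ x ∈ K, |χ₂ x * φ (proj x)| ≤ max C 0 := by
    intro x hx
    rw [abs_mul]
    calc |χ₂ x| * |φ (proj x)| ≤ 1 * max C 0 :=
          mul_le_mul (hb2 x) (hCb x hx) (abs_nonneg _) zero_le_one
      _ = max C 0 := one_mul _
  obtain ⟨L, hL⟩ := lip_mul (h1.lipschitzOnWith (s := K)) hLg zero_le_one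
    (le_max_right C 0) (fun x _ => hb1 x) hgb
  exact ⟨L, hL⟩

/-! The cutoff functions. -/

/-- Inner cutoff. -/
noncomputable def chiIn (a : ℝ) : ℝ → ℝ :=
  fun r => if a ≤ 0 then 1 else min 1 (max 0 ((2/a)*r + (-1)))

/-- Outer cutoff. -/
noncomputable def chiOut (b : ℝ) : ℝ → ℝ :=
  fun r => min 1 (max 0 ((-(1/b))*r + 2))

/-- Projection onto `[a,b]`. -/
noncomputable def projI (a b : ℝ) : ℝ → ℝ := fun r => max a (min r b)

lemma clamp_eq_one {u : ℝ} (h : 1 ≤ u) : min 1 (max 0 u) = 1 := by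
  rw [max_eq_right (le_trans zero_le_one h), min_eq_left h]

lemma clamp_eq_zero {u : ℝ} (h : u ≤ 0) : min 1 (max 0 u) = 0 := by
  rw [max_eq_left h, min_eq_right zero_le_one]

lemma clamp_eq_self {u : ℝ} (h0 : 0 ≤ u) (h1 : u ≤ 1) : min 1 (max 0 u) = u := by
  rw [max_eq_right h0, min_eq_right h1]

lemma clamp_bd (u : ℝ) : |min 1 (max 0 u)| ≤ 1 := by
  rw [abs_le]
  constructor
  · have := le_max_left (0:ℝ) u
    have h2 := le_min zero_le_one this
    linarith
  · exact min_le_left _ _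

lemma chiIn_lip (a : ℝ) : ∃ L : ℝ≥0, LipschitzWith L (chiIn a) := by
  by_cases h : a ≤ 0
  · refine ⟨0, ?_⟩
    have : chiIn a = fun _ => (1:ℝ) := by
      funext r; simp [chiIn, h]
    rw [this]
    exact LipschitzWith.const 1
  · refine ⟨‖2/a‖₊, ?_⟩
    have : chiIn a = fun r => min 1 (max 0 ((2/a)*r + (-1))) := by
      funext r; simp [chiIn, h]
    rw [this]
    exact ((lip_affine (2/a) (-1)).const_max 0).const_min 1

lemma chiIn_bd (a : ℝ) : ∀ x, |chiIn a x| ≤ 1 := by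
  intro x
  unfold chiIn
  split_ifs
  · simp
  · exact clamp_bd _

lemma chiOut_lip (b : ℝ) : LipschitzWith ‖-(1/b)‖₊ (chiOut b) :=
  ((lip_affine (-(1/b)) 2).const_max 0).const_min 1

lemma chiOut_bd (b : ℝ) : ∀ x, |chiOut b x| ≤ 1 := fun _ => clamp_bd _

lemma projI_lip (a b : ℝ) : LipschitzWith 1 (projI a b) :=
  (LipschitzWith.id.min_const b).const_max a

lemma chiIn_eq_one {a x : ℝ} (hax : a ≤ x) (hx : 0 < x) : chiIn a x = 1 := by
  unfold chiIn
  split_ifs with h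
  · rfl
  · push_neg at h
    apply clamp_eq_one
    have h1 := mul_le_mul_of_nonneg_left hax (le_of_lt (by positivity : (0:ℝ) < 2/a))
    have h2 : 2/a*a = 2 := by field_simp
    nlinarith
  
lemma chiIn_eq_zero {a x : ℝ} (ha : 0 < a) (hx : x ≤ a/2) : chiIn a x = 0 := by
  unfold chiIn
  rw [if_neg (not_le.mpr ha)]
  apply clamp_eq_zero
  have h1 := mul_le_mul_of_nonneg_left hx (le_of_lt (by positivity : (0:ℝ) < 2/a))
  have h2 : 2/a*(a/2) = 1 := by field_simp
  nlinarith

lemma chiIn_eq_mid {a x : ℝ} (ha : 0 < a) (h1 : a/2 ≤ x) (h2 : x ≤ a) :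
    chiIn a x = (2/a)*x + (-1) := by
  unfold chiIn
  rw [if_neg (not_le.mpr ha)]
  apply clamp_eq_self
  · have h3 := mul_le_mul_of_nonneg_left h1 (le_of_lt (by positivity : (0:ℝ) < 2/a))
    have h4 : 2/a*(a/2) = 1 := by field_simp
    nlinarith
  · have h3 := mul_le_mul_of_nonneg_left h2 (le_of_lt (by positivity : (0:ℝ) < 2/a))
    have h4 : 2/a*a = 2 := by field_simp
    nlinarith

lemma chiOut_eq_one {b x : ℝ} (hb : 0 < b) (hx : x ≤ b) : chiOut b x = 1 := by
  apply clamp_eq_one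
  have h1 := mul_le_mul_of_nonneg_left hx (le_of_lt (by positivity : (0:ℝ) < 1/b))
  have h2 : 1/b*b = 1 := by field_simp
  nlinarith

lemma chiOut_eq_zero {b x : ℝ} (hb : 0 < b) (hx : 2*b ≤ x) : chiOut b x = 0 := by
  apply clamp_eq_zero
  have h1 := mul_le_mul_of_nonneg_left hx (le_of_lt (by positivity : (0:ℝ) < 1/b))
  have h2 : 1/b*(2*b) = 2 := by field_simp <;> ring
  nlinarith

lemma chiOut_eq_mid {b x : ℝ} (hb : 0 < b) (h1 : b ≤ x) (h2 : x ≤ 2*b) :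
    chiOut b x = (-(1/b))*x + 2 := by
  apply clamp_eq_self
  · have h3 := mul_le_mul_of_nonneg_left h2 (le_of_lt (by positivity : (0:ℝ) < 1/b))
    have h4 : 1/b*(2*b) = 2 := by field_simp <;> ring
    nlinarith
  · have h3 := mul_le_mul_of_nonneg_left h1 (le_of_lt (by positivity : (0:ℝ) < 1/b))
    have h4 : 1/b*b = 1 := by field_simp
    nlinarith

end ExtensionAux

/-- extension lemma in `H`: given the universal constant `c` of the
weighted Sobolev embedding, any bounded `C¹` function `φ` with finite `H`-norm on
`[r₁,r₂] ∩ (0,∞)` (with `r₂` possibly `+∞`) extends to a locally Lipschitz function `ψ`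
on `(0,∞)` with `‖ψ‖_H ≤ ‖φ‖_{H([r₁,r₂])} + 3‖φ‖_{L^∞([r₁,r₂])}`; moreover if `r₂ ≥ 2r₁`
then `‖ψ‖_H ≤ (3c+1)‖φ‖_{H([r₁,r₂])}`. -/
theorem extension_in_H (c : ℝ) (hc : 0 < c)
    (hembed : ∀ (r₁ : ℝ) (r₂ : EReal), 0 ≤ r₁ → (r₁ : EReal) < r₂ →
      ((2 * r₁ : ℝ) : EReal) ≤ r₂ →
      ∀ φ : ℝ → ℝ, ContDiffOn ℝ 1 φ (sIcc r₁ r₂) →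
      ∀ r ∈ sIcc r₁ r₂,
        ENNReal.ofReal |φ r| ≤ ENNReal.ofReal c * (HnormSqOn φ (sIcc r₁ r₂)) ^ ((1:ℝ)/2)) :
    ∀ (r₁ : ℝ) (r₂ : EReal), 0 ≤ r₁ → (r₁ : EReal) < r₂ →
    ∀ φ : ℝ → ℝ, ContDiffOn ℝ 1 φ (sIcc r₁ r₂) →
    (∃ M : ℝ, ∀ r ∈ sIcc r₁ r₂, |φ r| ≤ M) →
    HnormSqOn φ (sIcc r₁ r₂) < ⊤ →
    ∃ ψ : ℝ → ℝ,
      -- `ψ` is locally Lipschitz on `(0,∞)`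
      (∀ K : Set ℝ, IsCompact K → K ⊆ Ioi 0 → ∃ L : NNReal, LipschitzOnWith L ψ K) ∧
      -- `ψ` extends `φ`
      (∀ r ∈ sIcc r₁ r₂, ψ r = φ r) ∧
      -- `‖ψ‖_H ≤ ‖φ‖_{H([r₁,r₂])} + 3 M` for every `L^∞` bound `M` of `φ`
      (∀ M : ℝ, (∀ r ∈ sIcc r₁ r₂, |φ r| ≤ M) →
        (HnormSqOn ψ (Ioi 0)) ^ ((1:ℝ)/2) ≤
          (HnormSqOn φ (sIcc r₁ r₂)) ^ ((1:ℝ)/2) + ENNReal.ofReal (3 * M)) ∧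
      -- the improved bound when `r₂ ≥ 2 r₁`
      (((2 * r₁ : ℝ) : EReal) ≤ r₂ →
        (HnormSqOn ψ (Ioi 0)) ^ ((1:ℝ)/2) ≤
          ENNReal.ofReal (3 * c + 1) * (HnormSqOn φ (sIcc r₁ r₂)) ^ ((1:ℝ)/2)) := by
  intro r₁ r₂ h0 hlt φ hφ hbdd hfin
  have hcases : r₂ = ⊤ ∨ ∃ b : ℝ, r₂ = (b : EReal) := by
    rcases eq_or_ne r₂ ⊤ with h | h
    · exact Or.inl h
    · right
      have hbot : r₂ ≠ ⊥ := by
        intro hb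
        rw [hb] at hlt
        exact absurd hlt (by simp)
      lift r₂ to ℝ using ⟨h, hbot⟩
      exact ⟨r₂, rfl⟩
  rcases hcases with htop | ⟨b, hb⟩
  · -- ============ case r₂ = ⊤ ============
    subst htop
    have hmem : ∀ x : ℝ, r₁ ≤ x → 0 < x → x ∈ sIcc r₁ (⊤ : EReal) :=
      fun x h1 h2 => ⟨⟨h1, le_top⟩, h2⟩
    set ψ : ℝ → ℝ := fun r => chiIn r₁ r * (1 * φ (max r₁ r)) with hψ
    have vext : ∀ r ∈ sIcc r₁ (⊤ : EReal), ψ r = φ r := by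
      rintro r ⟨⟨h1, _⟩, h2⟩
      simp only [hψ]
      rw [chiIn_eq_one h1 h2, max_eq_right h1, one_mul, one_mul]
    have key : ∀ M₀ : ℝ, 0 ≤ M₀ → (0 < r₁ → |φ r₁| ≤ M₀) →
        HnormSqOn ψ (Ioi 0) ≤ HnormSqOn φ (sIcc r₁ (⊤ : EReal)) + ENNReal.ofReal (8*M₀^2) := by
      intro M₀ hM0 hM1
      rcases h0.eq_or_lt with hz | hpos
      · -- r₁ = 0
        have hval : ∀ x ∈ Ioi (0:ℝ), ψ x = φ x := by
          intro x hx
          simp only [hψ]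
          have h1 : r₁ ≤ x := by rw [← hz]; exact (le_of_lt hx)
          rw [chiIn_eq_one h1 hx, max_eq_right h1, one_mul, one_mul]
        calc HnormSqOn ψ (Ioi 0) ≤ HnormSqOn φ (sIcc r₁ (⊤ : EReal)) := by
              rw [HnormSqOn_eq_EF, HnormSqOn_eq_EF]
              exact piece_mid isOpen_Ioi
                (fun x hx => hmem x (by rw [← hz]; exact (le_of_lt hx)) hx) hval
          _ ≤ _ := le_self_add
      · -- 0 < r₁
        have v0 : ∀ x ∈ Ioo (0:ℝ) (r₁/2), ψ x = 0 := by
          intro x hx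
          simp only [hψ]
          rw [chiIn_eq_zero hpos hx.2.le, zero_mul]
        have v1 : ∀ x ∈ Ioo (r₁/2) r₁, ψ x = (2/r₁*(φ r₁))*x + (-(φ r₁)) := by
          intro x hx
          simp only [hψ]
          rw [chiIn_eq_mid hpos hx.1.le hx.2.le, max_eq_left hx.2.le]
          ring
        have v2 : ∀ x ∈ Ioi r₁, ψ x = φ x := by
          intro x hx
          simp only [hψ]
          rw [chiIn_eq_one (le_of_lt hx) (hpos.trans hx), max_eq_right (le_of_lt hx),
            one_mul, one_mul]
        have B1 : ∫⁻ r in Ioc 0 (r₁/2), EF ψ r = 0 := by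
          rw [lint_Ioc_Ioo]
          exact piece_zero isOpen_Ioo v0
        have B2 : ∫⁻ r in Ioc (r₁/2) r₁, EF ψ r ≤ ENNReal.ofReal (4*(φ r₁)^2) := by
          calc ∫⁻ r in Ioc (r₁/2) r₁, EF ψ r
              ≤ ENNReal.ofReal (8*(φ r₁)^2/r₁) * ENNReal.ofReal (r₁ - r₁/2) :=
                piece_ramp v1 (fun r hr => rampIn_calc hpos hr)
            _ = ENNReal.ofReal (4*(φ r₁)^2) := by
                rw [← ENNReal.ofReal_mul (by positivity)]
                congr 1
                field_simp
                ring
        have B3 : ∫⁻ r in Ioi r₁, EF ψ r ≤ HnormSqOn φ (sIcc r₁ (⊤ : EReal)) :=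
          piece_mid isOpen_Ioi (fun x hx => hmem x (le_of_lt hx) (hpos.trans hx)) v2
        rw [HnormSqOn_eq_EF, lint_split (by linarith : (0:ℝ) ≤ r₁/2),
          lint_split (by linarith : r₁/2 ≤ r₁)]
        refine le_trans (add_le_add B1.le (add_le_add B2 B3)) ?_
        rw [zero_add]
        calc ENNReal.ofReal (4*(φ r₁)^2) + HnormSqOn φ (sIcc r₁ (⊤ : EReal))
            = HnormSqOn φ (sIcc r₁ (⊤ : EReal)) + ENNReal.ofReal (4*(φ r₁)^2) := by ring
          _ ≤ HnormSqOn φ (sIcc r₁ (⊤ : EReal)) + ENNReal.ofReal (8*M₀^2) := by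
              refine add_le_add le_rfl (ENNReal.ofReal_le_ofReal ?_)
              have h1 := abs_le.mp (hM1 hpos)
              nlinarith [sq_le_sq' h1.1 h1.2]
    refine ⟨ψ, ?_, vext, ?_, ?_⟩
    · -- locally Lipschitz
      intro K hK hKsub
      rcases K.eq_empty_or_nonempty with hKe | hKne
      · exact ⟨1, hKe ▸ lipschitzOnWith_empty 1 ψ⟩
      · have hεK : sInf K ∈ K := hK.sInf_mem hKne
        have hε : 0 < sInf K := hKsub hεK
        obtain ⟨Lin, hLin⟩ := chiIn_lip r₁
        have hsub : Icc (max r₁ (sInf K)) (max r₁ (sSup K)) ⊆ sIcc r₁ (⊤ : EReal) :=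
          fun y hy => hmem y (le_trans (le_max_left _ _) hy.1)
            (lt_of_lt_of_le (lt_of_lt_of_le hε (le_max_right r₁ _)) hy.1)
        have hmaps : ∀ x ∈ K, max r₁ x ∈ Icc (max r₁ (sInf K)) (max r₁ (sSup K)) :=
          fun x hx => ⟨max_le_max le_rfl (csInf_le hK.bddBelow hx),
            max_le_max le_rfl (le_csSup hK.bddAbove hx)⟩
        exact lip_total2 hφ (chiIn r₁) (fun _ => (1:ℝ)) hLin (LipschitzWith.const 1)
          (chiIn_bd r₁) (by intro x; simp) (fun r => max r₁ r)
          (LipschitzWith.id.const_max r₁) hsub hmaps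
    · -- main bound
      intro M hM
      have hM0 : 0 ≤ M :=
        (abs_nonneg _).trans (hM (r₁+1) (hmem _ (by linarith) (by linarith)))
      exact sqrt_bound hM0 (key M hM0 (fun hp => hM r₁ (hmem r₁ le_rfl hp)))
    · -- improved bound
      intro h2r
      have hnn : 0 ≤ c * (HnormSqOn φ (sIcc r₁ (⊤ : EReal))).toReal ^ ((1:ℝ)/2) :=
        mul_nonneg hc.le (Real.rpow_nonneg ENNReal.toReal_nonneg _)
      have hM1 : 0 < r₁ →
          |φ r₁| ≤ c * (HnormSqOn φ (sIcc r₁ (⊤ : EReal))).toReal ^ ((1:ℝ)/2) :=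
        fun hp => embed_real hc.le hfin.ne
          (hembed r₁ ⊤ h0 hlt h2r φ hφ r₁ (hmem r₁ le_rfl hp))
      exact improved_bound hc.le hfin.ne (sqrt_bound hnn (key _ hnn hM1))
  · -- ============ case r₂ = b finite ============
    subst hb
    have hr₁b : r₁ < b := EReal.coe_lt_coe_iff.mp hlt
    have hb0 : 0 < b := lt_of_le_of_lt h0 hr₁b
    have hmem : ∀ x : ℝ, r₁ ≤ x → x ≤ b → 0 < x → x ∈ sIcc r₁ (b : EReal) :=
      fun x h1 h2 h3 => ⟨⟨h1, EReal.coe_le_coe_iff.mpr h2⟩, h3⟩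
    set ψ : ℝ → ℝ := fun r => chiIn r₁ r * (chiOut b r * φ (projI r₁ b r)) with hψ
    have v2 : ∀ x : ℝ, r₁ ≤ x → x ≤ b → 0 < x → ψ x = φ x := by
      intro x h1 h2 h3
      simp only [hψ, projI]
      rw [chiIn_eq_one h1 h3, chiOut_eq_one hb0 h2, one_mul, one_mul,
        min_eq_left h2, max_eq_right h1]
    have vext : ∀ r ∈ sIcc r₁ (b : EReal), ψ r = φ r := by
      rintro r ⟨⟨h1, h2⟩, h3⟩
      exact v2 r h1 (EReal.coe_le_coe_iff.mp h2) h3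
    have v3 : ∀ x ∈ Ioo b (2*b), ψ x = (-(1/b)*(φ b))*x + 2*(φ b) := by
      intro x hx
      simp only [hψ, projI]
      rw [chiIn_eq_one (le_trans hr₁b.le hx.1.le) (hb0.trans hx.1),
        chiOut_eq_mid hb0 hx.1.le hx.2.le, min_eq_right hx.1.le, max_eq_right hr₁b.le]
      ring
    have v4 : ∀ x ∈ Ioi (2*b), ψ x = 0 := by
      intro x hx
      simp only [hψ]
      rw [chiOut_eq_zero hb0 (le_of_lt hx), zero_mul, mul_zero]
    have B4 : ∫⁻ r in Ioc b (2*b), EF ψ r ≤ ENNReal.ofReal (4*(φ b)^2) := by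
      calc ∫⁻ r in Ioc b (2*b), EF ψ r
          ≤ ENNReal.ofReal (4*(φ b)^2/b) * ENNReal.ofReal (2*b - b) :=
            piece_ramp v3 (fun r hr => rampOut_calc hb0 hr)
        _ = ENNReal.ofReal (4*(φ b)^2) := by
            rw [← ENNReal.ofReal_mul (by positivity)]
            congr 1
            have hb' : b ≠ 0 := ne_of_gt hb0
            have e : 2*b - b = b := by ring
            rw [e, div_mul_cancel₀ _ hb']
    have B5 : ∫⁻ r in Ioi (2*b), EF ψ r = 0 := piece_zero isOpen_Ioi v4
    have key : ∀ M₀ : ℝ, 0 ≤ M₀ → (0 < r₁ → |φ r₁| ≤ M₀) → |φ b| ≤ M₀ →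
        HnormSqOn ψ (Ioi 0) ≤ HnormSqOn φ (sIcc r₁ (b : EReal)) + ENNReal.ofReal (8*M₀^2) := by
      intro M₀ hM0 hM1 hM2
      have hsqb : (φ b)^2 ≤ M₀^2 := by
        have h1 := abs_le.mp hM2
        exact sq_le_sq' h1.1 h1.2
      rcases h0.eq_or_lt with hz | hpos
      · -- r₁ = 0
        have B3 : ∫⁻ r in Ioc 0 b, EF ψ r ≤ HnormSqOn φ (sIcc r₁ (b : EReal)) := by
          rw [lint_Ioc_Ioo]
          exact piece_mid isOpen_Ioo
            (fun x hx => hmem x (by rw [← hz]; exact hx.1.le) hx.2.le hx.1)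
            (fun x hx => v2 x (by rw [← hz]; exact hx.1.le) hx.2.le hx.1)
        rw [HnormSqOn_eq_EF, lint_split hb0.le, lint_split (by linarith : b ≤ 2*b)]
        refine le_trans (add_le_add B3 (add_le_add B4 B5.le)) ?_
        rw [add_zero]
        refine add_le_add le_rfl (ENNReal.ofReal_le_ofReal ?_)
        nlinarith
      · -- 0 < r₁
        have v0 : ∀ x ∈ Ioo (0:ℝ) (r₁/2), ψ x = 0 := by
          intro x hx
          simp only [hψ]
          rw [chiIn_eq_zero hpos hx.2.le, zero_mul]
        have v1 : ∀ x ∈ Ioo (r₁/2) r₁, ψ x = (2/r₁*(φ r₁))*x + (-(φ r₁)) := by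
          intro x hx
          have hxb : x ≤ b := by linarith [hx.2]
          simp only [hψ, projI]
          rw [chiIn_eq_mid hpos hx.1.le hx.2.le, chiOut_eq_one hb0 hxb,
            min_eq_left hxb, max_eq_left hx.2.le]
          ring
        have B1 : ∫⁻ r in Ioc 0 (r₁/2), EF ψ r = 0 := by
          rw [lint_Ioc_Ioo]
          exact piece_zero isOpen_Ioo v0
        have B2 : ∫⁻ r in Ioc (r₁/2) r₁, EF ψ r ≤ ENNReal.ofReal (4*(φ r₁)^2) := by
          calc ∫⁻ r in Ioc (r₁/2) r₁, EF ψ r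
              ≤ ENNReal.ofReal (8*(φ r₁)^2/r₁) * ENNReal.ofReal (r₁ - r₁/2) :=
                piece_ramp v1 (fun r hr => rampIn_calc hpos hr)
            _ = ENNReal.ofReal (4*(φ r₁)^2) := by
                rw [← ENNReal.ofReal_mul (by positivity)]
                congr 1
                field_simp
                ring
        have B3 : ∫⁻ r in Ioc r₁ b, EF ψ r ≤ HnormSqOn φ (sIcc r₁ (b : EReal)) := by
          rw [lint_Ioc_Ioo]
          exact piece_mid isOpen_Ioo
            (fun x hx => hmem x hx.1.le hx.2.le (hpos.trans hx.1))
            (fun x hx => v2 x hx.1.le hx.2.le (hpos.trans hx.1))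
        have hsqa : (φ r₁)^2 ≤ M₀^2 := by
          have h1 := abs_le.mp (hM1 hpos)
          exact sq_le_sq' h1.1 h1.2
        rw [HnormSqOn_eq_EF, lint_split (by linarith : (0:ℝ) ≤ r₁/2),
          lint_split (by linarith : r₁/2 ≤ r₁), lint_split hr₁b.le,
          lint_split (by linarith : b ≤ 2*b)]
        refine le_trans (add_le_add B1.le (add_le_add B2 (add_le_add B3
          (add_le_add B4 B5.le)))) ?_
        rw [zero_add, add_zero]
        calc ENNReal.ofReal (4*(φ r₁)^2) + (HnormSqOn φ (sIcc r₁ (b : EReal)) +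
              ENNReal.ofReal (4*(φ b)^2))
            = HnormSqOn φ (sIcc r₁ (b : EReal)) +
              (ENNReal.ofReal (4*(φ r₁)^2) + ENNReal.ofReal (4*(φ b)^2)) := by ring
          _ ≤ HnormSqOn φ (sIcc r₁ (b : EReal)) + ENNReal.ofReal (8*M₀^2) := by
              refine add_le_add le_rfl ?_
              rw [← ENNReal.ofReal_add (by positivity) (by positivity)]
              exact ENNReal.ofReal_le_ofReal (by nlinarith)
    refine ⟨ψ, ?_, vext, ?_, ?_⟩
    · -- locally Lipschitz
      intro K hK hKsub
      rcases K.eq_empty_or_nonempty with hKe | hKne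
      · exact ⟨1, hKe ▸ lipschitzOnWith_empty 1 ψ⟩
      · have hεK : sInf K ∈ K := hK.sInf_mem hKne
        have hε : 0 < sInf K := hKsub hεK
        obtain ⟨Lin, hLin⟩ := chiIn_lip r₁
        have hsub : Icc (max r₁ (min (sInf K) b)) b ⊆ sIcc r₁ (b : EReal) :=
          fun y hy => hmem y (le_trans (le_max_left _ _) hy.1) hy.2
            (lt_of_lt_of_le (lt_of_lt_of_le (lt_min hε hb0) (le_max_right r₁ _)) hy.1)
        have hmaps : ∀ x ∈ K, projI r₁ b x ∈ Icc (max r₁ (min (sInf K) b)) b := by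
          intro x hx
          simp only [projI]
          exact ⟨max_le_max le_rfl (min_le_min (csInf_le hK.bddBelow hx) le_rfl),
            max_le hr₁b.le (min_le_right _ _)⟩
        exact lip_total2 hφ (chiIn r₁) (chiOut b) hLin (chiOut_lip b)
          (chiIn_bd r₁) (chiOut_bd b) (projI r₁ b) (projI_lip r₁ b) hsub hmaps
    · -- main bound
      intro M hM
      have hbmem : b ∈ sIcc r₁ (b : EReal) := hmem b hr₁b.le le_rfl hb0
      have hM0 : 0 ≤ M := (abs_nonneg _).trans (hM b hbmem)
      exact sqrt_bound hM0 (key M hM0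
        (fun hp => hM r₁ (hmem r₁ le_rfl hr₁b.le hp)) (hM b hbmem))
    · -- improved bound
      intro h2r
      have hbmem : b ∈ sIcc r₁ (b : EReal) := hmem b hr₁b.le le_rfl hb0
      have hnn : 0 ≤ c * (HnormSqOn φ (sIcc r₁ (b : EReal))).toReal ^ ((1:ℝ)/2) :=
        mul_nonneg hc.le (Real.rpow_nonneg ENNReal.toReal_nonneg _)
      have hM1 : 0 < r₁ →
          |φ r₁| ≤ c * (HnormSqOn φ (sIcc r₁ (b : EReal))).toReal ^ ((1:ℝ)/2) :=
        fun hp => embed_real hc.le hfin.ne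
          (hembed r₁ b h0 hlt h2r φ hφ r₁ (hmem r₁ le_rfl hr₁b.le hp))
      have hM2 : |φ b| ≤ c * (HnormSqOn φ (sIcc r₁ (b : EReal))).toReal ^ ((1:ℝ)/2) :=
        embed_real hc.le hfin.ne (hembed r₁ b h0 hlt h2r φ hφ b hbmem)
      exact improved_bound hc.le hfin.ne (sqrt_bound hnn (key _ hnn hM1 hM2))
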